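/- Let α be an irrational real number and let δ > 0. Then the set S = { n ∈ ℕ : n ≥ 1 and ‖n²·α‖_{ℝ/ℤ} > δ } is not 2-large: there exist a 2-coloring c : ℕ → Bool and a length L ∈ ℕ such that for every a ∈ ℕ and every s ∈ S there exists n < L with c(a + n·s) ≠ c(a). -/

import Mathlib

set_option maxHeartbeats 1000000

open Finset Real

noncomputable section

/-- compatibility: the complex absolute value as an `AbsoluteValue` -/
def Complex.abs : AbsoluteValue ℂ ℝ where
  toFun := fun z => ‖z‖
  map_mul' := norm_mul
  nonneg' := norm_nonneg
  eq_zero' := fun _ => norm_eq_zero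
  add_le' := norm_add_le

lemma Complex.abs_conj (z : ℂ) : Complex.abs ((starRingEnd ℂ) z) = Complex.abs z :=
  Complex.norm_conj z

namespace QNTL

/-- distance to nearest integer -/
def nf (x : ℝ) : ℝ := |x - round x|

lemma nf_nonneg (x : ℝ) : 0 ≤ nf x := abs_nonneg _

lemma nf_zero : nf 0 = 0 := by simp [nf]

lemma nf_le (x : ℝ) (m : ℤ) : nf x ≤ |x - m| := by
  rcases eq_or_ne m (round x) with h | h
  · subst h; exact le_rfl
  · have h1 : |x - round x| ≤ 1 / 2 := abs_sub_round x
    have h2 : (1 : ℝ) ≤ |(m : ℝ) - round x| := by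
      have hz : m - round x ≠ 0 := fun hc => h (by omega)
      have : (1 : ℤ) ≤ |m - round x| := Int.one_le_abs hz
      calc (1:ℝ) = ((1:ℤ):ℝ) := by norm_num
      _ ≤ ((|m - round x| : ℤ) : ℝ) := by exact_mod_cast this
      _ = |(m:ℝ) - round x| := by push_cast; rfl
    have h3 : |(m:ℝ) - round x| ≤ |x - round x| + |x - m| := by
      have he : (m:ℝ) - round x = (x - round x) + -(x - m) := by ring
      rw [he]
      calc |(x - round x) + -(x - m)| ≤ |x - round x| + |-(x - m)| := abs_add_le _ _
      _ = |x - round x| + |x - m| := by rw [abs_neg]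
    calc nf x ≤ 1/2 := h1
    _ ≤ |x - m| := by linarith

lemma nf_sub_le (x y : ℝ) : nf (x - y) ≤ nf x + nf y := by
  have h := nf_le (x - y) (round x - round y)
  calc nf (x - y) ≤ |x - y - ((round x - round y : ℤ) : ℝ)| := h
  _ = |(x - round x) + -(y - round y)| := by push_cast; ring_nf
  _ ≤ |x - round x| + |-(y - round y)| := abs_add_le _ _
  _ = nf x + nf y := by rw [abs_neg]; rfl

/-- x/2 ≤ sin x on [0, π/2] -/
lemma half_le_sin {x : ℝ} (h0 : 0 ≤ x) (hx : x ≤ π / 2) : x / 2 ≤ Real.sin x := by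
  rcases eq_or_lt_of_le h0 with h | h0'
  · simp [← h]
  by_cases h1 : x ≤ 1
  · have hc := Real.sin_gt_sub_cube h0'
    have hx3 : x ^ 3 ≤ x := by
      nlinarith [mul_nonneg (mul_nonneg h0 (by linarith : (0:ℝ) ≤ 1 - x)) (by linarith : (0:ℝ) ≤ 1 + x)]
    nlinarith
  · push_neg at h1
    have hs12 : (15/32 : ℝ) < Real.sin (1/2) := by
      have := Real.sin_gt_sub_cube (by norm_num : (0:ℝ) < 1/2)
      nlinarith
    have hc12 : (7/8 : ℝ) ≤ Real.cos (1/2) := by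
      have hid : Real.cos (1/2) = 1 - 2 * Real.sin (1/4) ^ 2 := by
        have h2 := Real.cos_two_mul (1/4 : ℝ)
        have h3 := Real.sin_sq_add_cos_sq (1/4 : ℝ)
        have : Real.cos (2 * (1/4 : ℝ)) = Real.cos (1/2) := by norm_num
        nlinarith
      have h4 : Real.sin (1/4 : ℝ) ≤ 1/4 := le_of_lt (Real.sin_lt (by norm_num))
      have h5 : 0 ≤ Real.sin (1/4 : ℝ) := by
        apply Real.sin_nonneg_of_nonneg_of_le_pi (by norm_num)
        nlinarith [Real.pi_gt_three]
      nlinarith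
    have hs1 : (82/100 : ℝ) ≤ Real.sin 1 := by
      have he : Real.sin 1 = 2 * Real.sin (1/2) * Real.cos (1/2) := by
        have := Real.sin_two_mul (1/2 : ℝ)
        norm_num at this
        exact this
      nlinarith
    have hmono : Real.sin 1 ≤ Real.sin x := by
      rcases eq_or_lt_of_le (le_of_lt h1) with h | h
      · rw [← h]
      · apply le_of_lt
        apply Real.strictMonoOn_sin _ _ h
        · constructor
          · nlinarith [Real.pi_gt_three]
          · nlinarith [Real.pi_gt_three]
        · constructor
          · nlinarith [Real.pi_gt_three]
          · exact hx
    have hpi : π < 3.15 := Real.pi_lt_d2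
    linarith


/-- e(x) = exp(2πix) -/
def ee (x : ℝ) : ℂ := Complex.exp ((2 * π * x : ℝ) * Complex.I)

lemma ee_add (x y : ℝ) : ee (x + y) = ee x * ee y := by
  unfold ee
  rw [← Complex.exp_add]
  congr 1
  push_cast
  ring

lemma abs_ee (x : ℝ) : Complex.abs (ee x) = 1 := Complex.norm_exp_ofReal_mul_I _

lemma ee_re (x : ℝ) : (ee x).re = Real.cos (2 * π * x) := Complex.exp_ofReal_mul_I_re _

lemma conj_ee (x : ℝ) : (starRingEnd ℂ) (ee x) = ee (-x) := by
  unfold ee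
  rw [← Complex.exp_conj]
  congr 1
  rw [map_mul, Complex.conj_I, Complex.conj_ofReal]
  push_cast
  ring

lemma ee_nat_mul (m : ℕ) (x : ℝ) : ee ((m : ℝ) * x) = ee x ^ m := by
  unfold ee
  rw [← Complex.exp_nat_mul]
  congr 1
  push_cast
  ring

lemma abs_ee_sub_one_eq (x : ℝ) :
    Complex.abs (ee x - 1) = 2 * |Real.sin (π * x)| := by
  have hre : (ee x - 1).re = Real.cos (2 * π * x) - 1 := by
    simp [Complex.sub_re, ee_re]
  have him : (ee x - 1).im = Real.sin (2 * π * x) := by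
    rw [Complex.sub_im, Complex.one_im, sub_zero]
    exact Complex.exp_ofReal_mul_I_im _
  have hsq : Complex.abs (ee x - 1) ^ 2 = (2 * |Real.sin (π * x)|) ^ 2 := by
    rw [show Complex.abs (ee x - 1) ^ 2 = ‖ee x - 1‖ ^ 2 from rfl, Complex.sq_norm, Complex.normSq_apply, hre, him]
    have hA := Real.sin_sq_add_cos_sq (2 * π * x)
    have hB := Real.cos_two_mul (π * x)
    have hB' : Real.cos (2 * π * x) = 2 * Real.cos (π * x) ^ 2 - 1 := by
      rw [show 2 * π * x = 2 * (π * x) by ring]; exact hB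
    have hC := Real.sin_sq_add_cos_sq (π * x)
    have habs : |Real.sin (π * x)| ^ 2 = Real.sin (π * x) ^ 2 := sq_abs _
    nlinarith [hA, hB', hC, habs]
  have h1 : 0 ≤ Complex.abs (ee x - 1) := AbsoluteValue.nonneg _ _
  have h2 : 0 ≤ 2 * |Real.sin (π * x)| := by positivity
  nlinarith [hsq, h1, h2]

lemma two_nf_le_abs_ee_sub_one (x : ℝ) : 2 * nf x ≤ Complex.abs (ee x - 1) := by
  rw [abs_ee_sub_one_eq]
  have key : nf x ≤ |Real.sin (π * x)| := by
    set r := round x with hr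
    have hper : Real.sin (π * x) = (-1) ^ r * Real.sin (π * (x - r)) := by
      have := Real.sin_add_int_mul_pi (π * (x - r)) r
      rw [show π * (x - r) + (r : ℝ) * π = π * x by ring] at this
      rw [this]
    have habs : |Real.sin (π * x)| = |Real.sin (π * (x - r))| := by
      rw [hper, abs_mul]
      have : |((-1 : ℝ)) ^ r| = 1 := by
        rcases Int.even_or_odd r with he | ho
        · rw [he.neg_one_zpow]; norm_num
        · rw [Odd.neg_one_zpow ho]; norm_num
      rw [this, one_mul]
    rw [habs]
    have hu : |x - r| ≤ 1 / 2 := abs_sub_round x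
    have habs2 : |Real.sin (π * (x - r))| = Real.sin (π * |x - r|) := by
      rcases abs_cases (x - r) with ⟨h1, h2⟩ | ⟨h1, h2⟩
      · rw [h1]
        rw [abs_of_nonneg]
        apply Real.sin_nonneg_of_nonneg_of_le_pi
        · positivity
        · nlinarith [Real.pi_pos, hu, h1]
      · rw [h1, show π * -(x - r) = -(π * (x - r)) by ring, Real.sin_neg]
        rw [abs_of_nonpos]
        · rw [show π * (x - r) = -(π * -(x - r)) by ring, Real.sin_neg, neg_nonpos]
          apply Real.sin_nonneg_of_nonneg_of_le_pi
          · nlinarith [Real.pi_pos]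
          · nlinarith [Real.pi_pos, hu]
    rw [habs2]
    have hs := half_le_sin (x := π * |x - r|) (by positivity)
      (by nlinarith [Real.pi_pos, hu])
    have : nf x = |x - r| := rfl
    rw [this]
    nlinarith [Real.pi_gt_three, abs_nonneg (x - r)]
  linarith

lemma geom_abs {b : ℝ} (h : 0 < nf b) (M : ℕ) :
    Complex.abs (∑ m ∈ range M, ee b ^ m) ≤ 1 / nf b := by
  have hz : 2 * nf b ≤ Complex.abs (ee b - 1) := two_nf_le_abs_ee_sub_one b
  have hne : ee b ≠ 1 := by
    intro hc
    rw [hc] at hz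
    simp at hz
    linarith
  rw [geom_sum_eq hne, map_div₀]
  have hnum : Complex.abs (ee b ^ M - 1) ≤ 2 := by
    calc Complex.abs (ee b ^ M - 1) ≤ Complex.abs (ee b ^ M) + Complex.abs 1 := by
          have := AbsoluteValue.add_le Complex.abs (ee b ^ M) (-1)
          simpa [sub_eq_add_neg] using this
    _ = 2 := by rw [map_pow, abs_ee]; norm_num
  have hden : 0 < Complex.abs (ee b - 1) := by linarith
  calc Complex.abs (ee b ^ M - 1) / Complex.abs (ee b - 1)
      ≤ 2 / (2 * nf b) := by
        apply div_le_div₀ (by norm_num) hnum (by linarith) hz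
  _ = 1 / nf b := by field_simp


/-- decomposition of |S|^2 into diagonal and off-diagonal sums -/
lemma sum_sq_decomp (f : ℕ → ℂ) (L : ℕ) (hL : 1 ≤ L) :
    (∑ n ∈ range L, f n) * (starRingEnd ℂ) (∑ n ∈ range L, f n)
    = (∑ m ∈ range L, f m * (starRingEnd ℂ) (f m))
    + ((∑ t ∈ Ico 1 L, ∑ m ∈ range (L - t), f (m + t) * (starRingEnd ℂ) (f m))
    + (starRingEnd ℂ) (∑ t ∈ Ico 1 L, ∑ m ∈ range (L - t), f (m + t) * (starRingEnd ℂ) (f m))) := by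
  classical
  have expand : (∑ n ∈ range L, f n) * (starRingEnd ℂ) (∑ n ∈ range L, f n)
      = ∑ p ∈ (range L ×ˢ range L), f p.1 * (starRingEnd ℂ) (f p.2) := by
    rw [map_sum, Finset.sum_mul_sum, ← Finset.sum_product']
  rw [expand]
  rw [← Finset.sum_filter_add_sum_filter_not (range L ×ˢ range L) (fun p => p.1 < p.2)]
  have hlower : ∑ p ∈ (range L ×ˢ range L).filter (fun p => p.1 < p.2),
      f p.1 * (starRingEnd ℂ) (f p.2)
      = (starRingEnd ℂ) (∑ t ∈ Ico 1 L, ∑ m ∈ range (L - t),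
          f (m + t) * (starRingEnd ℂ) (f m)) := by
    have hconj : (starRingEnd ℂ) (∑ t ∈ Ico 1 L, ∑ m ∈ range (L - t),
          f (m + t) * (starRingEnd ℂ) (f m))
        = ∑ t ∈ Ico 1 L, ∑ m ∈ range (L - t), f m * (starRingEnd ℂ) (f (m + t)) := by
      rw [map_sum]
      apply Finset.sum_congr rfl
      intro t _
      rw [map_sum]
      apply Finset.sum_congr rfl
      intro m _
      rw [map_mul, Complex.conj_conj]
      ring
    rw [hconj, Finset.sum_sigma' (Ico 1 L) (fun t => range (L - t))
      (fun t m => f m * (starRingEnd ℂ) (f (m + t)))]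
    symm
    apply Finset.sum_nbij' (i := fun q => (q.2, q.2 + q.1))
      (j := fun p => (⟨p.2 - p.1, p.1⟩ : Σ _ : ℕ, ℕ))
    · intro q hq
      simp only [Finset.mem_sigma, Finset.mem_Ico, Finset.mem_range] at hq
      simp only [Finset.mem_filter, Finset.mem_product, Finset.mem_range]
      omega
    · intro p hp
      simp only [Finset.mem_filter, Finset.mem_product, Finset.mem_range] at hp
      simp only [Finset.mem_sigma, Finset.mem_Ico, Finset.mem_range]
      omega
    · rintro ⟨t, m⟩ hq
      simp only [Finset.mem_sigma, Finset.mem_Ico, Finset.mem_range] at hq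
      have h1 : m + t - m = t := by omega
      simp [h1]
    · rintro ⟨p1, p2⟩ hp
      simp only [Finset.mem_filter, Finset.mem_product, Finset.mem_range] at hp
      have h1 : p1 + (p2 - p1) = p2 := by omega
      simp [h1]
    · intro q hq
      simp only [Finset.mem_sigma, Finset.mem_Ico, Finset.mem_range] at hq
      rfl
  have hupper : ∑ p ∈ (range L ×ˢ range L).filter (fun p => ¬ p.1 < p.2),
      f p.1 * (starRingEnd ℂ) (f p.2)
      = ∑ t ∈ range L, ∑ m ∈ range (L - t), f (m + t) * (starRingEnd ℂ) (f m) := by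
    rw [Finset.sum_sigma' (range L) (fun t => range (L - t))
      (fun t m => f (m + t) * (starRingEnd ℂ) (f m))]
    symm
    apply Finset.sum_nbij' (i := fun q => (q.2 + q.1, q.2))
      (j := fun p => (⟨p.1 - p.2, p.2⟩ : Σ _ : ℕ, ℕ))
    · intro q hq
      simp only [Finset.mem_sigma, Finset.mem_range] at hq
      simp only [Finset.mem_filter, Finset.mem_product, Finset.mem_range]
      omega
    · intro p hp
      simp only [Finset.mem_filter, Finset.mem_product, Finset.mem_range] at hp
      simp only [Finset.mem_sigma, Finset.mem_range]
      omega
    · rintro ⟨t, m⟩ hq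
      simp only [Finset.mem_sigma, Finset.mem_range] at hq
      have h1 : m + t - m = t := by omega
      simp [h1]
    · rintro ⟨p1, p2⟩ hp
      simp only [Finset.mem_filter, Finset.mem_product, Finset.mem_range] at hp
      have h1 : p2 + (p1 - p2) = p1 := by omega
      simp [h1]
    · intro q hq
      rfl
  have hsplit : ∑ t ∈ range L, ∑ m ∈ range (L - t), f (m + t) * (starRingEnd ℂ) (f m)
      = (∑ m ∈ range L, f m * (starRingEnd ℂ) (f m))
      + ∑ t ∈ Ico 1 L, ∑ m ∈ range (L - t), f (m + t) * (starRingEnd ℂ) (f m) := by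
    rw [Finset.range_eq_Ico, Finset.sum_eq_sum_Ico_succ_bot hL]
    simp
  rw [hlower, hupper, hsplit]
  ring


/-- Core: a quadratic orbit confined to a half-interval for L steps forces
    a small denominator rational approximation to v with precision 240/L. -/
lemma core (x w v : ℝ) (L : ℕ) (hL : 100000 ≤ L)
    (hconf : (∀ n < L, Int.fract (x + w * n + v * n ^ 2) < 1/2) ∨
             (∀ n < L, 1/2 ≤ Int.fract (x + w * n + v * n ^ 2))) :
    ∃ r : ℕ, 1 ≤ r ∧ r ≤ 500 ∧ nf ((r : ℝ) * v) < 240 / L := by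
  classical
  set Qr : ℕ → ℝ := fun n => x + w * n + v * n ^ 2 with hQr
  have hL0 : 0 < L := by omega
  have hLpos : (0:ℝ) < L := by exact_mod_cast hL0
  have hLbig : (100000:ℝ) ≤ L := by exact_mod_cast hL
  -- Step 0: a common center for the avoided interval
  obtain ⟨cc, hcos⟩ : ∃ cc : ℝ, ∀ n < L,
      Real.cos (2 * π * (Int.fract (Qr n) - cc)) ≤ 0 := by
    rcases hconf with hA | hB
    · refine ⟨3/4, fun n hn => ?_⟩
      have h1 : 0 ≤ Int.fract (Qr n) := Int.fract_nonneg _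
      have h2 : Int.fract (Qr n) < 1/2 := hA n hn
      rw [show 2 * π * (Int.fract (Qr n) - 3/4)
          = -(2 * π * (3/4 - Int.fract (Qr n))) by ring, Real.cos_neg]
      apply Real.cos_nonpos_of_pi_div_two_le_of_le
      · nlinarith [Real.pi_pos]
      · nlinarith [Real.pi_pos]
    · refine ⟨1/4, fun n hn => ?_⟩
      have h1 : 1/2 ≤ Int.fract (Qr n) := hB n hn
      have h2 : Int.fract (Qr n) < 1 := Int.fract_lt_one _
      apply Real.cos_nonpos_of_pi_div_two_le_of_le
      · nlinarith [Real.pi_pos]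
      · nlinarith [Real.pi_pos]
  -- Step 1: some exponential sum is large
  set S : ℝ → ℂ := fun kr => ∑ n ∈ range L, ee (kr * Qr n) with hS
  have key1 : (L:ℝ) ≤ 2 * Complex.abs (S 1) + Complex.abs (S 2) := by
    have hpt : ∀ n ∈ range L,
        (1:ℝ) + 2 * Real.cos (2 * π * (1 * (Qr n - cc)))
          + Real.cos (2 * π * (2 * (Qr n - cc))) ≤ 0 := by
      intro n hn
      rw [Finset.mem_range] at hn
      set u := Int.fract (Qr n) with hu
      have hfl : Qr n - cc = (u - cc) + (⌊Qr n⌋ : ℝ) := by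
        rw [hu, Int.fract]; ring
      have hc1 : Real.cos (2 * π * (1 * (Qr n - cc)))
          = Real.cos (2 * π * (u - cc)) := by
        rw [hfl, show 2 * π * (1 * ((u - cc) + (⌊Qr n⌋ : ℝ)))
            = 2 * π * (u - cc) + (⌊Qr n⌋ : ℤ) * (2 * π) by push_cast; ring]
        exact Real.cos_add_int_mul_two_pi _ _
      have hc2 : Real.cos (2 * π * (2 * (Qr n - cc)))
          = Real.cos (2 * (2 * π * (u - cc))) := by
        rw [hfl, show 2 * π * (2 * ((u - cc) + (⌊Qr n⌋ : ℝ)))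
            = 2 * (2 * π * (u - cc)) + ((2 * ⌊Qr n⌋ : ℤ) : ℝ) * (2 * π) by push_cast; ring]
        exact Real.cos_add_int_mul_two_pi _ _
      rw [hc1, hc2, Real.cos_two_mul]
      have hcn := hcos n hn
      nlinarith [Real.neg_one_le_cos (2 * π * (u - cc)), hcn]
    have hsum := Finset.sum_nonpos hpt
    rw [Finset.sum_add_distrib, Finset.sum_add_distrib] at hsum
    rw [Finset.sum_const, Finset.card_range] at hsum
    have hC : ∀ kr : ℝ, ∑ n ∈ range L, Real.cos (2 * π * (kr * (Qr n - cc)))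
        = (ee (-(kr * cc)) * S kr).re := by
      intro kr
      have hterm : ∀ n : ℕ, Real.cos (2 * π * (kr * (Qr n - cc)))
          = (ee (-(kr * cc)) * ee (kr * Qr n)).re := by
        intro n
        rw [← ee_add, show -(kr * cc) + kr * Qr n = kr * (Qr n - cc) by ring]
        rw [ee_re]
      calc ∑ n ∈ range L, Real.cos (2 * π * (kr * (Qr n - cc)))
          = ∑ n ∈ range L, (ee (-(kr * cc)) * ee (kr * Qr n)).re := by
            exact Finset.sum_congr rfl (fun n _ => hterm n)
      _ = ((∑ n ∈ range L, ee (-(kr * cc)) * ee (kr * Qr n))).re := by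
            rw [Complex.re_sum]
      _ = (ee (-(kr * cc)) * S kr).re := by rw [← Finset.mul_sum]
    have h2sum : ∑ n ∈ range L, 2 * Real.cos (2 * π * (1 * (Qr n - cc)))
        = 2 * (ee (-(1 * cc)) * S 1).re := by
      rw [← Finset.mul_sum, hC 1]
    have h1sum : ∑ n ∈ range L, Real.cos (2 * π * (2 * (Qr n - cc)))
        = (ee (-(2 * cc)) * S 2).re := hC 2
    rw [h2sum, h1sum] at hsum
    have hb1 : -(Complex.abs (S 1)) ≤ (ee (-(1 * cc)) * S 1).re := by
      have h : |(ee (-(1 * cc)) * S 1).re| ≤ Complex.abs (ee (-(1 * cc)) * S 1) :=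
        Complex.abs_re_le_norm (ee (-(1 * cc)) * S 1)
      have habs : Complex.abs (ee (-(1 * cc)) * S 1) = Complex.abs (S 1) := by
        rw [map_mul, abs_ee, one_mul]
      rw [habs] at h
      exact (abs_le.mp h).1
    have hb2 : -(Complex.abs (S 2)) ≤ (ee (-(2 * cc)) * S 2).re := by
      have h : |(ee (-(2 * cc)) * S 2).re| ≤ Complex.abs (ee (-(2 * cc)) * S 2) :=
        Complex.abs_re_le_norm (ee (-(2 * cc)) * S 2)
      have habs : Complex.abs (ee (-(2 * cc)) * S 2) = Complex.abs (S 2) := by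
        rw [map_mul, abs_ee, one_mul]
      rw [habs] at h
      exact (abs_le.mp h).1
    have : (L:ℝ) • (1:ℝ) = (L:ℝ) := by simp
    rw [nsmul_eq_mul] at hsum
    linarith
  -- Step 2: choose k ∈ {1,2}
  obtain ⟨k, hk12, hSk⟩ : ∃ k : ℕ, (k = 1 ∨ k = 2) ∧
      (L:ℝ)/5 ≤ Complex.abs (S (k : ℝ)) := by
    rcases le_or_gt ((L:ℝ)/5) (Complex.abs (S 2)) with h | h
    · exact ⟨2, Or.inr rfl, by push_cast; exact h⟩
    · refine ⟨1, Or.inl rfl, ?_⟩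
      push_cast
      linarith
  have hk1 : 1 ≤ k := by omega
  have hk2 : k ≤ 2 := by omega
  -- Step 3: Weyl differencing
  set f : ℕ → ℂ := fun n => ee ((k:ℝ) * Qr n) with hf
  set T : ℕ → ℂ := fun t => ∑ m ∈ range (L - t), f (m + t) * (starRingEnd ℂ) (f m) with hT
  have hterm : ∀ t m : ℕ, f (m + t) * (starRingEnd ℂ) (f m)
      = ee ((k:ℝ) * (w * t + v * t^2)) * ee (2 * (k:ℝ) * v * t) ^ m := by
    intro t m
    rw [hf]
    simp only []
    rw [conj_ee, ← ee_add, ← ee_nat_mul m (2 * (k:ℝ) * v * t), ← ee_add]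
    congr 1
    rw [hQr]
    simp only []
    push_cast
    ring
  have hTeq : ∀ t : ℕ, T t = ee ((k:ℝ) * (w * t + v * t^2))
      * ∑ m ∈ range (L - t), ee (2 * (k:ℝ) * v * t) ^ m := by
    intro t
    rw [hT]
    simp only []
    rw [Finset.mul_sum]
    exact Finset.sum_congr rfl (fun m _ => hterm t m)
  have htriv : ∀ t : ℕ, Complex.abs (T t) ≤ (L:ℝ) := by
    intro t
    calc Complex.abs (T t) ≤ ∑ m ∈ range (L - t),
        Complex.abs (f (m + t) * (starRingEnd ℂ) (f m)) :=
          AbsoluteValue.sum_le _ _ _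
    _ = ∑ m ∈ range (L - t), (1:ℝ) := by
        apply Finset.sum_congr rfl
        intro m _
        rw [map_mul, Complex.abs_conj]
        simp [hf, abs_ee]
    _ = ((L - t : ℕ) : ℝ) := by rw [Finset.sum_const, Finset.card_range]; simp
    _ ≤ (L:ℝ) := by exact_mod_cast Nat.sub_le L t
  have hsmall : ∀ t : ℕ, (120 / (L:ℝ) ≤ nf (2 * (k:ℝ) * v * t)) →
      Complex.abs (T t) ≤ (L:ℝ)/120 := by
    intro t ht
    have hnfpos : 0 < nf (2 * (k:ℝ) * v * t) := by
      have : (0:ℝ) < 120 / L := by positivity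
      linarith
    rw [hTeq t, map_mul, abs_ee, one_mul]
    calc Complex.abs (∑ m ∈ range (L - t), ee (2 * (k:ℝ) * v * t) ^ m)
        ≤ 1 / nf (2 * (k:ℝ) * v * t) := geom_abs hnfpos _
    _ ≤ 1 / (120 / L) := by
        apply div_le_div_of_nonneg_left (by norm_num) (by positivity) ht
    _ = (L:ℝ)/120 := by field_simp
  -- Step 4: main inequality
  have hmain : (L:ℝ)^2/25 ≤ (L:ℝ) + 2 * ∑ t ∈ Ico 1 L, Complex.abs (T t) := by
    have hsq : ((L:ℝ)/5)^2 ≤ Complex.abs (S (k:ℝ)) ^ 2 := by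
      apply pow_le_pow_left₀ (by positivity) hSk
    have habs : Complex.abs (S (k:ℝ)) ^ 2
        = Complex.abs (S (k:ℝ) * (starRingEnd ℂ) (S (k:ℝ))) := by
      rw [map_mul, Complex.abs_conj, sq]
    have hdecomp := sum_sq_decomp f L (by omega)
    have hSf : S (k:ℝ) = ∑ n ∈ range L, f n := rfl
    have hbound : Complex.abs (S (k:ℝ) * (starRingEnd ℂ) (S (k:ℝ)))
        ≤ (L:ℝ) + 2 * ∑ t ∈ Ico 1 L, Complex.abs (T t) := by
      rw [hSf, hdecomp]
      have t1 : Complex.abs ((∑ m ∈ range L, f m * (starRingEnd ℂ) (f m))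
          + ((∑ t ∈ Ico 1 L, T t) + (starRingEnd ℂ) (∑ t ∈ Ico 1 L, T t)))
          ≤ Complex.abs (∑ m ∈ range L, f m * (starRingEnd ℂ) (f m))
            + Complex.abs ((∑ t ∈ Ico 1 L, T t) + (starRingEnd ℂ) (∑ t ∈ Ico 1 L, T t)) :=
        AbsoluteValue.add_le _ _ _
      have t2 : Complex.abs ((∑ t ∈ Ico 1 L, T t) + (starRingEnd ℂ) (∑ t ∈ Ico 1 L, T t))
          ≤ Complex.abs (∑ t ∈ Ico 1 L, T t)
            + Complex.abs ((starRingEnd ℂ) (∑ t ∈ Ico 1 L, T t)) :=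
        AbsoluteValue.add_le _ _ _
      have t3 : Complex.abs ((∑ m ∈ range L, f m * (starRingEnd ℂ) (f m))
          + ((∑ t ∈ Ico 1 L, T t) + (starRingEnd ℂ) (∑ t ∈ Ico 1 L, T t)))
          ≤ (L:ℝ) + 2 * ∑ t ∈ Ico 1 L, Complex.abs (T t) := by
            have hd : Complex.abs (∑ m ∈ range L, f m * (starRingEnd ℂ) (f m)) ≤ (L:ℝ) := by
              calc Complex.abs (∑ m ∈ range L, f m * (starRingEnd ℂ) (f m))
                  ≤ ∑ m ∈ range L, Complex.abs (f m * (starRingEnd ℂ) (f m)) :=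
                    AbsoluteValue.sum_le _ _ _
              _ = ∑ m ∈ range L, (1:ℝ) := by
                  apply Finset.sum_congr rfl
                  intro m _
                  rw [map_mul, Complex.abs_conj]
                  simp [hf, abs_ee]
              _ = (L:ℝ) := by rw [Finset.sum_const, Finset.card_range]; simp
            have hU : Complex.abs (∑ t ∈ Ico 1 L, T t)
                ≤ ∑ t ∈ Ico 1 L, Complex.abs (T t) := AbsoluteValue.sum_le _ _ _
            have hUc : Complex.abs ((starRingEnd ℂ) (∑ t ∈ Ico 1 L, T t))
                = Complex.abs (∑ t ∈ Ico 1 L, T t) := Complex.abs_conj _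
            rw [hUc] at t2
            linarith
      exact t3
    calc (L:ℝ)^2/25 = ((L:ℝ)/5)^2 := by ring
    _ ≤ Complex.abs (S (k:ℝ)) ^ 2 := hsq
    _ = _ := habs
    _ ≤ _ := hbound
  -- Step 5: many t with small nf
  set P : Finset ℕ := (Ico 1 L).filter (fun t : ℕ => nf (2 * (k:ℝ) * v * t) < 120 / L) with hP
  have hsplit : ∑ t ∈ Ico 1 L, Complex.abs (T t)
      ≤ (P.card : ℝ) * L + (L:ℝ) * ((L:ℝ)/120) := by
    rw [← Finset.sum_filter_add_sum_filter_not (Ico 1 L)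
      (fun t : ℕ => nf (2 * (k:ℝ) * v * t) < 120 / L) (fun t : ℕ => Complex.abs (T t))]
    have h1 : ∑ t ∈ P, Complex.abs (T t) ≤ (P.card : ℝ) * L := by
      calc ∑ t ∈ P, Complex.abs (T t) ≤ P.card • (L:ℝ) :=
            Finset.sum_le_card_nsmul _ _ _ (fun t _ => htriv t)
      _ = (P.card : ℝ) * L := by rw [nsmul_eq_mul]
    have h2 : ∑ t ∈ (Ico 1 L).filter (fun t : ℕ => ¬ nf (2 * (k:ℝ) * v * t) < 120 / L),
        Complex.abs (T t) ≤ (L:ℝ) * ((L:ℝ)/120) := by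
      calc ∑ t ∈ (Ico 1 L).filter (fun t : ℕ => ¬ nf (2 * (k:ℝ) * v * t) < 120 / L),
          Complex.abs (T t)
          ≤ ((Ico 1 L).filter (fun t : ℕ => ¬ nf (2 * (k:ℝ) * v * t) < 120 / L)).card • ((L:ℝ)/120) := by
            apply Finset.sum_le_card_nsmul
            intro t ht
            rw [Finset.mem_filter] at ht
            exact hsmall t (not_lt.mp ht.2)
      _ ≤ (L:ℝ) * ((L:ℝ)/120) := by
            rw [nsmul_eq_mul]
            have hcard : (((Ico 1 L).filter
                (fun t : ℕ => ¬ nf (2 * (k:ℝ) * v * t) < 120 / L)).card : ℝ) ≤ (L:ℝ) := by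
              have h3 : ((Ico 1 L).filter
                  (fun t : ℕ => ¬ nf (2 * (k:ℝ) * v * t) < 120 / L)).card ≤ (Ico 1 L).card :=
                Finset.card_filter_le _ _
              have h4 : (Ico 1 L).card = L - 1 := by rw [Nat.card_Ico]
              have h5 : ((Ico 1 L).filter
                  (fun t : ℕ => ¬ nf (2 * (k:ℝ) * v * t) < 120 / L)).card ≤ L := by omega
              exact_mod_cast h5
            have hpos : (0:ℝ) ≤ (L:ℝ)/120 := by positivity
            nlinarith
    linarith
  have hcardP : ((L:ℕ)/110 : ℕ) < P.card := by
    have hreal : ((L/110 : ℕ) : ℝ) < (P.card : ℝ) := by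
      have h1 : ((L/110 : ℕ) : ℝ) ≤ (L:ℝ)/110 := Nat.cast_div_le
      have h2 : (L:ℝ)/110 < (P.card : ℝ) := by nlinarith [hmain, hsplit]
      linarith
    exact_mod_cast hreal
  -- Step 6: pigeonhole
  set P' : Finset ℕ := insert 0 P with hP'
  have h0P : (0:ℕ) ∉ P := by
    intro hc
    rw [hP, Finset.mem_filter, Finset.mem_Ico] at hc
    omega
  have hcardP' : P'.card = P.card + 1 := Finset.card_insert_of_notMem h0P
  have hmaps : ∀ t ∈ P', t / 110 ∈ range (L/110 + 1) := by
    intro t ht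
    rw [Finset.mem_range]
    have htL : t < L := by
      rw [hP', Finset.mem_insert] at ht
      rcases ht with h | h
      · omega
      · rw [hP, Finset.mem_filter, Finset.mem_Ico] at h; omega
    have := Nat.div_le_div_right (c := 110) (le_of_lt htL)
    omega
  have hcards : (range (L/110 + 1)).card < P'.card := by
    rw [Finset.card_range, hcardP']
    omega
  obtain ⟨t₁, ht₁, t₂, ht₂, hne, hdiv⟩ :=
    Finset.exists_ne_map_eq_of_card_lt_of_maps_to hcards hmaps
  have hnf' : ∀ t ∈ P', nf (2 * (k:ℝ) * v * t) < 120 / L := by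
    intro t ht
    rw [hP', Finset.mem_insert] at ht
    rcases ht with h | h
    · subst h
      rw [show (2 * (k:ℝ) * v * ((0:ℕ):ℝ)) = 0 by push_cast; ring, nf_zero]
      positivity
    · rw [hP, Finset.mem_filter] at h
      exact h.2
  -- difference bounded by 109
  have hclose : ∀ t₁ t₂ : ℕ, t₁ / 110 = t₂ / 110 → t₁ < t₂ → t₂ - t₁ ≤ 109 := by
    intro a b hdiv hlt
    have h1 := Nat.div_add_mod a 110
    have h2 := Nat.div_add_mod b 110
    have h3 : a % 110 < 110 := Nat.mod_lt _ (by norm_num)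
    have h4 : b % 110 < 110 := Nat.mod_lt _ (by norm_num)
    omega
  have hfinal : ∀ a b : ℕ, a ∈ P' → b ∈ P' → a < b → a / 110 = b / 110 →
      ∃ r : ℕ, 1 ≤ r ∧ r ≤ 500 ∧ nf ((r : ℝ) * v) < 240 / L := by
    intro a b ha hb hlt hdiv
    set q := b - a with hq
    have hq1 : 1 ≤ q := by omega
    have hq109 : q ≤ 109 := hclose a b hdiv hlt
    have hr1 : 1 ≤ 2 * k * q := by rcases hk12 with h | h <;> subst h <;> omega
    have hr500 : 2 * k * q ≤ 500 := by rcases hk12 with h | h <;> subst h <;> omega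
    refine ⟨2 * k * q, hr1, hr500, ?_⟩
    have hcast : ((2 * k * q : ℕ) : ℝ) * v
        = 2 * (k:ℝ) * v * (b:ℝ) - 2 * (k:ℝ) * v * (a:ℝ) := by
      have hba : ((q : ℕ) : ℝ) = (b:ℝ) - (a:ℝ) := by
        rw [hq]
        push_cast [Nat.cast_sub (le_of_lt hlt)]
        ring
      push_cast
      push_cast at hba
      linear_combination (2 * (k:ℝ) * v) * hba
    rw [hcast]
    calc nf (2 * (k:ℝ) * v * (b:ℝ) - 2 * (k:ℝ) * v * (a:ℝ))
        ≤ nf (2 * (k:ℝ) * v * (b:ℝ)) + nf (2 * (k:ℝ) * v * (a:ℝ)) := nf_sub_le _ _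
    _ < 120 / L + 120 / L := by
        have := hnf' b hb
        have := hnf' a ha
        linarith
    _ = 240 / L := by ring
  rcases lt_or_gt_of_ne hne with hlt | hlt
  · exact hfinal t₁ t₂ ht₁ ht₂ hlt hdiv
  · exact hfinal t₂ t₁ ht₂ ht₁ hlt hdiv.symm

end QNTL
end

open QNTL

/-- Quadratic (nilsystem) analogue: for irrational `α` and `δ > 0`, the set of `n ≥ 1`
with `‖n²·α‖_{ℝ/ℤ} > δ` is not 2-large. -/
theorem quadratic_not_two_large
    (α : ℝ) (hα : Irrational α) (δ : ℝ) (hδ : 0 < δ) :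
    ∃ (c : ℕ → Bool) (L : ℕ),
      ∀ a : ℕ, ∀ s ∈ {n : ℕ | 1 ≤ n ∧ ∀ m : ℤ, δ < |(n : ℝ) ^ 2 * α - (m : ℝ)|},
        ∃ n < L, c (a + n * s) ≠ c a := by
  classical
  obtain ⟨Λ, hΛdvd, hΛ1⟩ : ∃ Λ : ℕ, (∀ r : ℕ, 1 ≤ r → r ≤ 500 → r ∣ Λ) ∧ 120 ≤ Λ := by
    refine ⟨Nat.factorial 500, fun r h1 h2 => Nat.dvd_factorial (by omega) (by omega), ?_⟩
    have h5 : Nat.factorial 5 = 120 := by norm_num [Nat.factorial]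
    calc 120 = Nat.factorial 5 := h5.symm
    _ ≤ Nat.factorial 500 := Nat.factorial_le (by norm_num)
  have hΛpos : 0 < Λ := by omega
  have hΛposR : (0:ℝ) < (Λ:ℝ) := by exact_mod_cast hΛpos
  set β : ℝ := α / (2 * Λ) with hβ
  set L : ℕ := 1000 * Λ * (⌈(Λ:ℝ)/δ⌉₊ + 1) with hLdef
  have hL : 100000 ≤ L := by
    calc 100000 ≤ 1000 * 120 * 1 := by norm_num
    _ ≤ 1000 * Λ * (⌈(Λ:ℝ)/δ⌉₊ + 1) := by
        apply Nat.mul_le_mul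
        · exact Nat.mul_le_mul_left 1000 hΛ1
        · omega
  have hLposR : (0:ℝ) < (L:ℝ) := by
    have : 0 < L := by omega
    exact_mod_cast this
  refine ⟨fun n => decide (Int.fract ((n:ℝ)^2 * β) < 1/2), L, ?_⟩
  intro a s hs
  simp only [Set.mem_setOf_eq] at hs
  obtain ⟨hs1, hs2⟩ := hs
  by_contra hcon
  push_neg at hcon
  set x : ℝ := (a:ℝ)^2 * β with hx
  set w : ℝ := 2 * a * s * β with hw
  set v : ℝ := (s:ℝ)^2 * β with hv
  have key : ∀ n : ℕ, ((a + n * s : ℕ):ℝ)^2 * β = x + w * n + v * n^2 := by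
    intro n
    rw [hx, hw, hv]
    push_cast
    ring
  have hdec : ∀ n, n < L →
      (Int.fract (x + w*n + v*n^2) < 1/2 ↔ Int.fract ((a:ℝ)^2*β) < 1/2) := by
    intro n hn
    have h := hcon n hn
    rw [decide_eq_decide] at h
    rw [← key n]
    exact h
  have hconf : (∀ n < L, Int.fract (x + w*n + v*n^2) < 1/2) ∨
      (∀ n < L, 1/2 ≤ Int.fract (x + w*n + v*n^2)) := by
    by_cases h0 : Int.fract ((a:ℝ)^2 * β) < 1/2
    · left; intro n hn; exact (hdec n hn).mpr h0
    · right; intro n hn; exact not_lt.mp (fun hc => h0 ((hdec n hn).mp hc))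
  obtain ⟨r, hr1, hr500, hnf⟩ := core x w v L hL hconf
  have hrdvdΛ : r ∣ Λ := hΛdvd r hr1 hr500
  have hrdvd : r ∣ 2 * Λ := hrdvdΛ.mul_left 2
  set D : ℕ := 2 * Λ / r with hD
  have hDr : (D:ℝ) * (r:ℝ) = 2 * (Λ:ℝ) := by
    have : D * r = 2 * Λ := Nat.div_mul_cancel hrdvd
    exact_mod_cast this
  have hrposR : (0:ℝ) < (r:ℝ) := by exact_mod_cast (by omega : 0 < r)
  set m : ℤ := (D:ℤ) * round ((r:ℝ) * v) with hm
  have hval : (s:ℝ)^2 * α = (D:ℝ) * ((r:ℝ) * v) := by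
    have h2Λ : (2 * (Λ:ℝ)) ≠ 0 := by positivity
    rw [hv, hβ]
    rw [show (D:ℝ) * ((r:ℝ) * ((s:ℝ)^2 * (α / (2 * (Λ:ℝ)))))
        = ((D:ℝ)*(r:ℝ)) * ((s:ℝ)^2 * α) / (2*(Λ:ℝ)) by ring]
    rw [hDr]
    field_simp
  have hdist : |(s:ℝ)^2 * α - (m:ℝ)| ≤ (2*(Λ:ℝ)) * nf ((r:ℝ)*v) := by
    have heq : (s:ℝ)^2*α - (m:ℝ) = (D:ℝ) * ((r:ℝ)*v - (round ((r:ℝ)*v) : ℤ)) := by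
      rw [hval, hm]
      push_cast
      ring
    rw [heq, abs_mul]
    have hDnn : (0:ℝ) ≤ (D:ℝ) := by positivity
    have hDabs : |(D:ℝ)| = (D:ℝ) := abs_of_nonneg hDnn
    have hD2Λ : (D:ℝ) ≤ 2*(Λ:ℝ) := by
      have : D ≤ 2 * Λ := Nat.div_le_self _ _
      exact_mod_cast this
    have hnfd : |(r:ℝ)*v - (round ((r:ℝ)*v) : ℤ)| = nf ((r:ℝ)*v) := rfl
    rw [hDabs, hnfd]
    have := nf_nonneg ((r:ℝ)*v)
    nlinarith
  have hfin : (2*(Λ:ℝ)) * nf ((r:ℝ)*v) < δ := by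
    have h1 : (2*(Λ:ℝ)) * nf ((r:ℝ)*v) < (2*(Λ:ℝ)) * (240 / L) := by
      apply mul_lt_mul_of_pos_left hnf (by positivity)
    have h2 : (2*(Λ:ℝ)) * (240 / L) ≤ δ := by
      have hceil : (Λ:ℝ)/δ ≤ (⌈(Λ:ℝ)/δ⌉₊ : ℝ) := Nat.le_ceil _
      have hLval : (L:ℝ) = 1000 * (Λ:ℝ) * ((⌈(Λ:ℝ)/δ⌉₊ : ℝ) + 1) := by
        rw [hLdef]; push_cast; ring
      have h3 : (Λ:ℝ) ≤ δ * ((⌈(Λ:ℝ)/δ⌉₊ : ℝ) + 1) := by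
        have h4 : (Λ:ℝ)/δ ≤ (⌈(Λ:ℝ)/δ⌉₊ : ℝ) + 1 := by linarith
        calc (Λ:ℝ) = ((Λ:ℝ)/δ) * δ := by field_simp
        _ ≤ ((⌈(Λ:ℝ)/δ⌉₊ : ℝ) + 1) * δ := mul_le_mul_of_nonneg_right h4 (le_of_lt hδ)
        _ = δ * ((⌈(Λ:ℝ)/δ⌉₊ : ℝ) + 1) := by ring
      have hδL : 1000 * (Λ:ℝ) * (Λ:ℝ) ≤ δ * L := by
        rw [hLval]
        nlinarith [hΛposR]
      have hΛ1R : (120:ℝ) ≤ (Λ:ℝ) := by exact_mod_cast hΛ1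
      rw [show (2*(Λ:ℝ)) * (240 / (L:ℝ)) = 480 * Λ / L by ring, div_le_iff₀ hLposR]
      nlinarith [hΛposR, hΛ1R, hδL]
    linarith
  have hcontra := hs2 m
  linarith [lt_of_le_of_lt hdist hfin, hcontra]
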